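/- arXiv:2005.10817 — 4 statements merged into one kernel-verified Lean document; each statement's English description precedes it below -/
import Mathlib

section
/- For all real a > 0 and b ≥ 1/2, the integral ∫₀^∞ exp(-a x^{1/b}) dx equals Γ(b+1)/a^b, and this is at most √(π/2)·(b/a)^b. -/
open MeasureTheory Real

private lemma tangent_log {x y : ℝ} (hx : 0 < x) (hy : 0 < y) :
    x * Real.log y + x - y ≤ x * Real.log x := by
  have h := Real.log_le_sub_one_of_pos (div_pos hy hx)
  rw [Real.log_div hy.ne' hx.ne'] at h
  have h2 : x * (Real.log y - Real.log x) ≤ x * (y / x - 1) :=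
    mul_le_mul_of_nonneg_left h hx.le
  have h3 : x * (y / x - 1) = y - x := by field_simp
  nlinarith [h2, h3]

private lemma Gamma_3div2 : Real.Gamma (3/2) = Real.sqrt π / 2 := by
  have h : (3/2 : ℝ) = 1/2 + 1 := by norm_num
  rw [h, Real.Gamma_add_one (by norm_num), Real.Gamma_one_half_eq]
  ring

private lemma Gamma_two' : Real.Gamma 2 = 1 := by
  have h : (2 : ℝ) = 1 + 1 := by norm_num
  rw [h, Real.Gamma_add_one (by norm_num), Real.Gamma_one]
  ring

private lemma Gamma_5div2 : Real.Gamma (5/2) = 3/4 * Real.sqrt π := by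
  have h : (5/2 : ℝ) = 3/2 + 1 := by norm_num
  rw [h, Real.Gamma_add_one (by norm_num), Gamma_3div2]
  ring

private lemma numeric1 : 0 ≤ 1 + Real.log π - 3 * Real.log 2 := by
  have h8 : Real.log (8/π) ≤ 1 := by
    rw [Real.log_le_iff_le_exp (by positivity), div_le_iff₀ Real.pi_pos]
    nlinarith [Real.exp_one_gt_d9, Real.pi_gt_three]
  have h2 : Real.log (8/π) = 3 * Real.log 2 - Real.log π := by
    rw [Real.log_div (by norm_num) Real.pi_ne_zero]
    have : (8:ℝ) = 2 ^ (3:ℕ) := by norm_num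
    rw [this, Real.log_pow]
    push_cast; ring
  linarith

private lemma numeric2 : 1 ≤ Real.log π + 2 * Real.log 3 - 3 * Real.log 2 := by
  have h8 : 1 ≤ Real.log (9 * π / 8) := by
    rw [Real.le_log_iff_exp_le (by positivity)]
    nlinarith [Real.exp_one_lt_d9, Real.pi_gt_three]
  have h2 : Real.log (9 * π / 8) = Real.log π + 2 * Real.log 3 - 3 * Real.log 2 := by
    rw [Real.log_div (by positivity) (by norm_num), Real.log_mul (by norm_num) Real.pi_ne_zero]
    have h9 : (9:ℝ) = 3 ^ (2:ℕ) := by norm_num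
    have h82 : (8:ℝ) = 2 ^ (3:ℕ) := by norm_num
    rw [h9, h82, Real.log_pow, Real.log_pow]
    push_cast; ring
  linarith

private lemma numeric3 : 0 ≤ 1 + 3 * Real.log 2 - Real.log 3 - Real.log π := by
  have h8 : Real.log (3 * π / 8) ≤ 1 := by
    rw [Real.log_le_iff_le_exp (by positivity)]
    nlinarith [Real.exp_one_gt_d9, Real.pi_lt_d2]
  have h2 : Real.log (3 * π / 8) = Real.log 3 + Real.log π - 3 * Real.log 2 := by
    rw [Real.log_div (by positivity) (by norm_num), Real.log_mul (by norm_num) Real.pi_ne_zero]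
    have h82 : (8:ℝ) = 2 ^ (3:ℕ) := by norm_num
    rw [h82, Real.log_pow]
    push_cast; ring
  linarith

private lemma log_RHS {b : ℝ} (hb : 0 < b) :
    Real.log (Real.sqrt (π/2) * b ^ b) = (Real.log π - Real.log 2) / 2 + b * Real.log b := by
  rw [Real.log_mul (by positivity) (by positivity : (0:ℝ) < b ^ b).ne',
    Real.log_sqrt (by positivity), Real.log_rpow hb,
    Real.log_div Real.pi_ne_zero (by norm_num)]

private lemma base_case {b : ℝ} (hb : 1/2 ≤ b) (hb2 : b ≤ 3/2) :
    Real.Gamma (b+1) ≤ Real.sqrt (π/2) * b ^ b := by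
  have hbpos : (0:ℝ) < b := by linarith
  have hG : 0 < Real.Gamma (b+1) := Real.Gamma_pos_of_pos (by linarith)
  have hR : (0:ℝ) < Real.sqrt (π/2) * b ^ b := by positivity
  rw [← Real.log_le_log_iff hG hR, log_RHS hbpos]
  have hsqrtpi : Real.log (Real.sqrt π) = Real.log π / 2 := Real.log_sqrt Real.pi_pos.le
  rcases le_total b 1 with h1 | h1
  · -- use convexity between 3/2 and 2
    have hc := Real.convexOn_log_Gamma.2 (by norm_num : (3/2:ℝ) ∈ Set.Ioi 0)
      (by norm_num : (2:ℝ) ∈ Set.Ioi 0) (by linarith : (0:ℝ) ≤ 2 - 2*b)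
      (by linarith : (0:ℝ) ≤ 2*b - 1) (by ring)
    simp only [smul_eq_mul, Function.comp_apply] at hc
    have he : (2 - 2*b) * (3/2) + (2*b - 1) * 2 = b + 1 := by ring
    rw [he, Gamma_3div2, Gamma_two', Real.log_one] at hc
    have hlg : Real.log (Real.sqrt π / 2) = Real.log π / 2 - Real.log 2 := by
      rw [Real.log_div (Real.sqrt_ne_zero'.mpr Real.pi_pos) (by norm_num), hsqrtpi]
    rw [hlg] at hc
    -- tangent bound at 1/2
    have ht := tangent_log hbpos (by norm_num : (0:ℝ) < 1/2)
    have hl2 : Real.log (1/2 : ℝ) = -Real.log 2 := by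
      rw [one_div, Real.log_inv]
    rw [hl2] at ht
    nlinarith [mul_nonneg (by linarith : (0:ℝ) ≤ b - 1/2) numeric1]
  · -- use convexity between 2 and 5/2
    have hc := Real.convexOn_log_Gamma.2 (by norm_num : (2:ℝ) ∈ Set.Ioi 0)
      (by norm_num : (5/2:ℝ) ∈ Set.Ioi 0) (by linarith : (0:ℝ) ≤ 3 - 2*b)
      (by linarith : (0:ℝ) ≤ 2*b - 2) (by ring)
    simp only [smul_eq_mul, Function.comp_apply] at hc
    have he : (3 - 2*b) * 2 + (2*b - 2) * (5/2) = b + 1 := by ring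
    rw [he, Gamma_5div2, Gamma_two', Real.log_one] at hc
    have hlg : Real.log (3/4 * Real.sqrt π) = Real.log 3 - 2 * Real.log 2 + Real.log π / 2 := by
      rw [Real.log_mul (by norm_num) (Real.sqrt_ne_zero'.mpr Real.pi_pos), hsqrtpi,
        Real.log_div (by norm_num) (by norm_num)]
      have h4 : (4:ℝ) = 2 ^ (2:ℕ) := by norm_num
      rw [h4, Real.log_pow]
      push_cast; ring
    rw [hlg] at hc
    -- tangent bound at 3/2
    have ht := tangent_log hbpos (by norm_num : (0:ℝ) < 3/2)
    have hl32 : Real.log (3/2 : ℝ) = Real.log 3 - Real.log 2 :=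
      Real.log_div (by norm_num) (by norm_num)
    rw [hl32] at ht
    nlinarith [mul_nonneg (by linarith : (0:ℝ) ≤ b - 1) numeric3, numeric2]

private lemma key_ineq {b : ℝ} (hb : 1/2 ≤ b) :
    Real.Gamma (b+1) ≤ Real.sqrt (π/2) * b ^ b := by
  obtain ⟨n, hn⟩ := exists_nat_ge (b - 3/2)
  induction n generalizing b with
  | zero => exact base_case hb (by simpa using hn)
  | succ n ih =>
    rcases le_total b (3/2) with h1 | h1
    · exact base_case hb h1
    · have hb1 : 1/2 ≤ b - 1 := by linarith
      have hn1 : b - 1 - 3/2 ≤ n := by push_cast at hn ⊢; linarith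
      have ihb := ih hb1 hn1
      have hbm : (0:ℝ) < b - 1 := by linarith
      have hGa : Real.Gamma (b + 1) = b * Real.Gamma ((b-1) + 1) := by
        have : b + 1 = ((b - 1) + 1) + 1 := by ring
        rw [this, Real.Gamma_add_one (by linarith : (b-1)+1 ≠ 0)]
        ring_nf
      rw [hGa]
      have h2 : b * Real.Gamma ((b-1)+1) ≤ b * (Real.sqrt (π/2) * (b-1) ^ (b-1)) :=
        mul_le_mul_of_nonneg_left ihb (by linarith)
      have h3 : (b-1) ^ (b-1) ≤ b ^ (b-1) :=
        Real.rpow_le_rpow hbm.le (by linarith) (by linarith)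
      have h4 : b ^ (b-1) * b = b ^ b := by
        have h5 : b ^ (b-1) * b ^ (1:ℝ) = b ^ (b-1+1) :=
          (Real.rpow_add (by linarith : (0:ℝ) < b) _ _).symm
        rw [Real.rpow_one] at h5
        rw [h5]
        norm_num
      calc b * Real.Gamma ((b-1)+1) ≤ b * (Real.sqrt (π/2) * (b-1) ^ (b-1)) := h2
        _ ≤ b * (Real.sqrt (π/2) * b ^ (b-1)) := by
            apply mul_le_mul_of_nonneg_left _ (by linarith)
            exact mul_le_mul_of_nonneg_left h3 (Real.sqrt_nonneg _)
        _ = Real.sqrt (π/2) * (b ^ (b-1) * b) := by ring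
        _ = Real.sqrt (π/2) * b ^ b := by rw [h4]

theorem stmt0 (a b : ℝ) (ha : 0 < a) (hb : 1/2 ≤ b) :
    (∫ x in Set.Ioi (0:ℝ), Real.exp (-a * x ^ (1/b))) = Real.Gamma (b+1) / a ^ b ∧
    Real.Gamma (b+1) / a ^ b ≤ Real.sqrt (Real.pi/2) * (b/a) ^ b := by
  have hbpos : (0:ℝ) < b := by linarith
  have h1b : (0:ℝ) < 1/b := by positivity
  constructor
  · have h := integral_exp_neg_mul_rpow h1b ha
    rw [one_div_one_div] at h
    rw [h]
    have he : (-1) / (1/b) = -b := by field_simp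
    rw [he, Real.rpow_neg ha.le]
    rw [div_eq_inv_mul]
  · have hkey := key_ineq hb
    have hapow : (0:ℝ) < a ^ b := Real.rpow_pos_of_pos ha b
    rw [Real.div_rpow hbpos.le ha.le]
    rw [div_le_iff₀ hapow] at *
    calc Real.Gamma (b+1) ≤ Real.sqrt (π/2) * b ^ b := hkey
      _ = Real.sqrt (π/2) * (b ^ b / a ^ b) * a ^ b := by field_simp
end

section
/- Let f₁,…,fₙ be drawn uniformly at random without replacement from a finite population c₁,…,cₚ of real numbers, and let g₁,…,gₙ be drawn uniformly at random with replacement from the same population. Then for every continuous convex function φ: ℝ → ℝ, E[φ(f₁+⋯+fₙ)] ≤ E[φ(g₁+⋯+gₙ)]. -/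
open MeasureTheory ProbabilityTheory Finset
open scoped ENNReal

namespace Stmt7Aux

variable {n p : ℕ}

noncomputable def Acard (h : Fin n → Fin p) : ℕ :=
  (Finset.univ.filter (fun e : Fin n ↪ Fin p => ∀ i, ∃ j, e j = h i)).card

noncomputable def W (h : Fin n → Fin p) : ℝ :=
  ((p : ℝ) ^ n)⁻¹ * (Fintype.card (Fin n ↪ Fin p) : ℝ) / (Acard h : ℝ)

lemma W_nonneg (h : Fin n → Fin p) : 0 ≤ W h := by
  unfold W; positivity

lemma Acard_pos (hnp : n ≤ p) (h : Fin n → Fin p) : 0 < Acard h := by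
  classical
  rw [Acard, Finset.card_pos]
  have h1 : (Finset.image h Finset.univ).card ≤ n := le_trans Finset.card_image_le (by simp)
  have h2 : n ≤ Fintype.card (Fin p) := by simpa using hnp
  obtain ⟨t, hst, htcard⟩ := Finset.exists_superset_card_eq h1 h2
  set q : (t : Finset (Fin p)) ≃ Fin n := Finset.equivFinOfCardEq htcard with hq
  refine ⟨⟨fun j => (q.symm j : Fin p), ?_⟩, ?_⟩
  · intro a b hab
    simpa using q.symm.injective (Subtype.ext hab)
  · simp only [Finset.mem_filter, Finset.mem_univ, true_and]
    intro i
    refine ⟨q ⟨h i, hst (Finset.mem_image_of_mem h (Finset.mem_univ i))⟩, ?_⟩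
    exact congrArg Subtype.val (q.symm_apply_apply _)

lemma Acard_comp_perm (s : Equiv.Perm (Fin p)) (h : Fin n → Fin p) :
    Acard (s ∘ h) = Acard h := by
  classical
  unfold Acard
  refine Finset.card_bij' (fun e _ => e.trans s.symm.toEmbedding)
    (fun e _ => e.trans s.toEmbedding) ?_ ?_ ?_ ?_
  · intro e he
    simp only [Finset.mem_filter, Finset.mem_univ, true_and] at he ⊢
    intro i
    obtain ⟨j, hj⟩ := he i
    exact ⟨j, by simp [Function.Embedding.trans_apply, hj]⟩
  · intro e he
    simp only [Finset.mem_filter, Finset.mem_univ, true_and] at he ⊢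
    intro i
    obtain ⟨j, hj⟩ := he i
    exact ⟨j, by simp [Function.Embedding.trans_apply, hj]⟩
  · intro e _; ext j; simp
  · intro e _; ext j; simp

lemma W_comp_perm (s : Equiv.Perm (Fin p)) (h : Fin n → Fin p) :
    W (s ∘ h) = W h := by
  unfold W; rw [Acard_comp_perm]

/-- fiber-counting double sum -/
lemma sum_comp (F : (Fin n → Fin p) → ℝ) :
    ∑ e : Fin n ↪ Fin p, ∑ π : Fin n → Fin n, F (⇑e ∘ π)
      = ∑ h : Fin n → Fin p, (Acard h : ℝ) * F h := by
  classical
  have step : ∀ e : Fin n ↪ Fin p, ∑ π : Fin n → Fin n, F (⇑e ∘ π)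
      = ∑ h : Fin n → Fin p, if (∀ i, ∃ j, e j = h i) then F h else 0 := by
    intro e
    rw [← Finset.sum_filter]
    refine Finset.sum_bij (fun π _ => ⇑e ∘ π) ?_ ?_ ?_ ?_
    · intro π _
      simp only [Finset.mem_filter, Finset.mem_univ, true_and]
      exact fun i => ⟨π i, rfl⟩
    · intro π₁ _ π₂ _ hcomp
      funext i
      exact e.injective (congrFun hcomp i)
    · intro h hh
      simp only [Finset.mem_filter, Finset.mem_univ, true_and] at hh
      choose π hπ using hh
      exact ⟨π, Finset.mem_univ _, funext fun i => (hπ i)⟩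
    · intro π _; rfl
  simp_rw [step]
  rw [Finset.sum_comm]
  refine Finset.sum_congr rfl fun h _ => ?_
  rw [← Finset.sum_filter, Finset.sum_const, nsmul_eq_mul]
  rfl


lemma exists_perm_comp (e e' : Fin n ↪ Fin p) :
    ∃ s : Equiv.Perm (Fin p), ∀ i, s (e i) = e' i := by
  classical
  have hcard : Fintype.card {x : Fin p // x ∈ Set.range ⇑e}
      = Fintype.card {x : Fin p // x ∈ Set.range ⇑e'} := by
    have : ∀ f : Fin n ↪ Fin p, Fintype.card {x : Fin p // x ∈ Set.range ⇑f} = n := by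
      intro f
      rw [Fintype.card_eq.mpr ⟨(Equiv.ofInjective _ f.injective).symm⟩, Fintype.card_fin]
    rw [this, this]
  have h2 : Fintype.card {x : Fin p // ¬ x ∈ Set.range ⇑e}
      = Fintype.card {x : Fin p // ¬ x ∈ Set.range ⇑e'} := by
    rw [Fintype.card_subtype_compl, Fintype.card_subtype_compl, hcard]
  let q1 : {x : Fin p // x ∈ Set.range ⇑e} ≃ {x : Fin p // x ∈ Set.range ⇑e'} :=
    (Equiv.ofInjective _ e.injective).symm.trans (Equiv.ofInjective _ e'.injective)
  let q2 : {x : Fin p // ¬ x ∈ Set.range ⇑e} ≃ {x : Fin p // ¬ x ∈ Set.range ⇑e'} :=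
    Fintype.equivOfCardEq h2
  refine ⟨(Equiv.sumCompl (· ∈ Set.range ⇑e)).symm.trans
    ((q1.sumCongr q2).trans (Equiv.sumCompl (· ∈ Set.range ⇑e'))), fun i => ?_⟩
  have hm : e i ∈ Set.range ⇑e := ⟨i, rfl⟩
  simp only [Equiv.trans_apply]
  rw [Equiv.sumCompl_symm_apply_of_pos (p := (· ∈ Set.range ⇑e)) hm]
  simp only [Equiv.sumCongr_apply, Sum.map_inl, Equiv.sumCompl_apply_inl]
  simp [q1, Equiv.ofInjective_symm_apply]


lemma pow_ne (hnp : n ≤ p) : ((p:ℝ)^n) ≠ 0 := by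
  rcases Nat.eq_zero_or_pos n with h | h
  · simp [h]
  · have hp : 0 < p := lt_of_lt_of_le h hnp
    positivity

lemma card_emb_pos (hnp : n ≤ p) : (0:ℝ) < (Fintype.card (Fin n ↪ Fin p) : ℝ) := by
  have : Nonempty (Fin n ↪ Fin p) := ⟨Fin.castLEEmb hnp⟩
  exact_mod_cast Fintype.card_pos

lemma Acard_mul_W (hnp : n ≤ p) (h : Fin n → Fin p) :
    (Acard h : ℝ) * W h = ((p:ℝ)^n)⁻¹ * (Fintype.card (Fin n ↪ Fin p) : ℝ) := by
  have hA : (Acard h : ℝ) ≠ 0 := by exact_mod_cast (Acard_pos hnp h).ne'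
  have hp := pow_ne hnp
  rw [W]; field_simp

lemma sum_W_comp (hnp : n ≤ p) (e : Fin n ↪ Fin p) :
    ∑ π : Fin n → Fin n, W (⇑e ∘ π) = 1 := by
  classical
  have hconst : ∀ e' : Fin n ↪ Fin p, ∑ π : Fin n → Fin n, W (⇑e' ∘ π)
      = ∑ π : Fin n → Fin n, W (⇑e ∘ π) := by
    intro e'
    obtain ⟨s, hs⟩ := exists_perm_comp e e'
    refine Finset.sum_congr rfl fun π _ => ?_
    have hcomp : ⇑e' ∘ π = ⇑s ∘ (⇑e ∘ π) := by funext x; simp [hs]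
    rw [hcomp, W_comp_perm]
  have hN := card_emb_pos hnp
  have htot : ∑ e' : Fin n ↪ Fin p, ∑ π : Fin n → Fin n, W (⇑e' ∘ π)
      = (Fintype.card (Fin n ↪ Fin p) : ℝ) := by
    rw [sum_comp W]
    simp_rw [Acard_mul_W hnp]
    rw [Finset.sum_const, Finset.card_univ, nsmul_eq_mul]
    have hcardfun : (Fintype.card (Fin n → Fin p) : ℝ) = (p:ℝ)^n := by
      simp [Fintype.card_fun]
    rw [hcardfun, ← mul_assoc, mul_inv_cancel₀ (pow_ne hnp), one_mul]
  have this : (Fintype.card (Fin n ↪ Fin p) : ℝ) * ∑ π : Fin n → Fin n, W (⇑e ∘ π)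
      = (Fintype.card (Fin n ↪ Fin p) : ℝ) := by
    calc (Fintype.card (Fin n ↪ Fin p) : ℝ) * ∑ π : Fin n → Fin n, W (⇑e ∘ π)
        = ∑ e' : Fin n ↪ Fin p, ∑ π : Fin n → Fin n, W (⇑e' ∘ π) := by
          rw [Finset.sum_congr rfl (fun e' _ => hconst e'), Finset.sum_const,
            Finset.card_univ, nsmul_eq_mul]
      _ = _ := htot
  have h1 : (Fintype.card (Fin n ↪ Fin p) : ℝ) * ∑ π : Fin n → Fin n, W (⇑e ∘ π)
      = (Fintype.card (Fin n ↪ Fin p) : ℝ) * 1 := by rw [mul_one]; exact this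
  exact mul_left_cancel₀ hN.ne' h1

lemma marginal (hnp : n ≤ p) (e : Fin n ↪ Fin p) (i : Fin n) (a : Fin n) :
    ∑ π ∈ Finset.univ.filter (fun π : Fin n → Fin n => π i = a), W (⇑e ∘ π)
      = ((n:ℝ))⁻¹ := by
  classical
  have hconst : ∀ b : Fin n,
      ∑ π ∈ Finset.univ.filter (fun π : Fin n → Fin n => π i = b), W (⇑e ∘ π)
      = ∑ π ∈ Finset.univ.filter (fun π : Fin n → Fin n => π i = a), W (⇑e ∘ π) := by
    intro b
    refine Finset.sum_nbij' (fun π => ⇑(Equiv.swap b a) ∘ π) (fun π => ⇑(Equiv.swap b a) ∘ π)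
      ?_ ?_ ?_ ?_ ?_
    · intro π hπ
      simp only [Finset.mem_filter, Finset.mem_univ, true_and] at hπ ⊢
      simp [Function.comp, hπ]
    · intro π hπ
      simp only [Finset.mem_filter, Finset.mem_univ, true_and] at hπ ⊢
      simp [Function.comp, hπ]
    · intro π _; funext x; simp
    · intro π _; funext x; simp
    · intro π _
      have hcomp : ⇑e ∘ (⇑(Equiv.swap b a) ∘ π)
          = ⇑(Equiv.swap (e b) (e a)) ∘ (⇑e ∘ π) := by
        rw [← Function.comp_assoc, ← Function.comp_assoc, e.injective.swap_comp]
      rw [hcomp, W_comp_perm]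
  have hsum : ∑ b : Fin n, ∑ π ∈ Finset.univ.filter
      (fun π : Fin n → Fin n => π i = b), W (⇑e ∘ π) = 1 := by
    rw [Finset.sum_fiberwise Finset.univ (fun π : Fin n → Fin n => π i) (fun π => W (⇑e ∘ π))]
    exact sum_W_comp hnp e
  rw [Finset.sum_congr rfl (fun b _ => hconst b), Finset.sum_const, Finset.card_univ,
    Fintype.card_fin, nsmul_eq_mul] at hsum
  have hn : (0:ℝ) < (n:ℝ) := by
    have : Nonempty (Fin n) := ⟨i⟩
    exact_mod_cast Fin.pos i
  field_simp at hsum ⊢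
  linarith [hsum]

lemma mean (hnp : n ≤ p) (c : Fin p → ℝ) (e : Fin n ↪ Fin p) :
    ∑ π : Fin n → Fin n, W (⇑e ∘ π) * (∑ i, c (e (π i))) = ∑ i, c (e i) := by
  classical
  simp_rw [Finset.mul_sum]
  rw [Finset.sum_comm]
  have inner : ∀ i : Fin n,
      ∑ π : Fin n → Fin n, W (⇑e ∘ π) * c (e (π i)) = (n:ℝ)⁻¹ * ∑ a, c (e a) := by
    intro i
    rw [← Finset.sum_fiberwise Finset.univ (fun π : Fin n → Fin n => π i)
      (fun π => W (⇑e ∘ π) * c (e (π i)))]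
    have : ∀ a : Fin n, ∑ π ∈ Finset.univ.filter (fun π : Fin n → Fin n => π i = a),
        W (⇑e ∘ π) * c (e (π i)) = (n:ℝ)⁻¹ * c (e a) := by
      intro a
      have : ∀ π ∈ Finset.univ.filter (fun π : Fin n → Fin n => π i = a),
          W (⇑e ∘ π) * c (e (π i)) = W (⇑e ∘ π) * c (e a) := by
        intro π hπ
        simp only [Finset.mem_filter] at hπ
        rw [hπ.2]
      rw [Finset.sum_congr rfl this, ← Finset.sum_mul, marginal hnp e i a]
    rw [Finset.sum_congr rfl (fun a _ => this a), ← Finset.mul_sum]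
  rw [Finset.sum_congr rfl (fun i _ => inner i), Finset.sum_const, Finset.card_univ,
    Fintype.card_fin, nsmul_eq_mul]
  rcases Nat.eq_zero_or_pos n with h | h
  · subst h; simp
  · have hn : ((n:ℝ)) ≠ 0 := by positivity
    field_simp


lemma key_ineq (hnp : n ≤ p) (c : Fin p → ℝ) (φ : ℝ → ℝ) (hφ : ConvexOn ℝ Set.univ φ) :
    ∑ e : Fin n ↪ Fin p, (Fintype.card (Fin n ↪ Fin p) : ℝ)⁻¹ * φ (∑ i, c (e i))
      ≤ ∑ h : Fin n → Fin p, ((p:ℝ)^n)⁻¹ * φ (∑ i, c (h i)) := by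
  classical
  have jensen : ∀ e : Fin n ↪ Fin p,
      φ (∑ i, c (e i)) ≤ ∑ π : Fin n → Fin n, W (⇑e ∘ π) * φ (∑ i, c ((⇑e ∘ π) i)) := by
    intro e
    have h1 := hφ.map_sum_le (t := Finset.univ)
      (w := fun π : Fin n → Fin n => W (⇑e ∘ π))
      (p := fun π : Fin n → Fin n => ∑ i, c ((⇑e ∘ π) i))
      (fun π _ => W_nonneg _) (sum_W_comp hnp e) (fun π _ => Set.mem_univ _)
    have h2 : ∑ π : Fin n → Fin n, W (⇑e ∘ π) • (∑ i, c ((⇑e ∘ π) i)) = ∑ i, c (e i) := by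
      simp_rw [smul_eq_mul]
      exact mean hnp c e
    rwa [h2] at h1
  have hNinv : (0:ℝ) ≤ (Fintype.card (Fin n ↪ Fin p) : ℝ)⁻¹ := by positivity
  calc ∑ e : Fin n ↪ Fin p, (Fintype.card (Fin n ↪ Fin p) : ℝ)⁻¹ * φ (∑ i, c (e i))
      ≤ ∑ e : Fin n ↪ Fin p, (Fintype.card (Fin n ↪ Fin p) : ℝ)⁻¹ *
          ∑ π : Fin n → Fin n, W (⇑e ∘ π) * φ (∑ i, c ((⇑e ∘ π) i)) := by
        refine Finset.sum_le_sum fun e _ => ?_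
        exact mul_le_mul_of_nonneg_left (jensen e) hNinv
    _ = (Fintype.card (Fin n ↪ Fin p) : ℝ)⁻¹ *
          ∑ e : Fin n ↪ Fin p, ∑ π : Fin n → Fin n,
            (fun h => W h * φ (∑ i, c (h i))) (⇑e ∘ π) := by
        rw [Finset.mul_sum]
    _ = (Fintype.card (Fin n ↪ Fin p) : ℝ)⁻¹ *
          ∑ h : Fin n → Fin p, (Acard h : ℝ) * (W h * φ (∑ i, c (h i))) := by
        rw [sum_comp (fun h => W h * φ (∑ i, c (h i)))]
    _ = ∑ h : Fin n → Fin p, ((p:ℝ)^n)⁻¹ * φ (∑ i, c (h i)) := by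
        rw [Finset.mul_sum]
        refine Finset.sum_congr rfl fun h _ => ?_
        rw [← mul_assoc (Acard h : ℝ), Acard_mul_W hnp]
        have hN := (card_emb_pos hnp).ne'
        have hd : ((p.descFactorial n : ℝ)) ≠ 0 := by
          simpa [Fintype.card_embedding_eq, Fintype.card_fin] using hN
        field_simp


lemma integral_comp_fintype {Ω α : Type*} [MeasurableSpace Ω] [Fintype α] [MeasurableSpace α]
    [MeasurableSingletonClass α] (μ : Measure Ω) [IsFiniteMeasure μ]
    {X : Ω → α} (hX : Measurable X) (f : α → ℝ) :
    ∫ ω, f (X ω) ∂μ = ∑ a, (μ (X ⁻¹' {a})).toReal * f a := by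
  classical
  have key : ∀ ω, f (X ω) = ∑ a, Set.indicator (X ⁻¹' {a}) (fun _ => f a) ω := by
    intro ω
    rw [Finset.sum_eq_single (X ω)]
    · rw [Set.indicator_of_mem (by simp : ω ∈ X ⁻¹' {X ω})]
    · intro b _ hb
      exact Set.indicator_of_notMem (by simp [Ne.symm hb]) _
    · simp
  simp_rw [key]
  rw [integral_finset_sum]
  · refine Finset.sum_congr rfl fun a _ => ?_
    rw [integral_indicator_const _ (hX (measurableSet_singleton a))]
    rw [smul_eq_mul]
    rfl
  · intro a _
    exact (integrable_indicator_iff (hX (measurableSet_singleton a))).2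
      (integrableOn_const (measure_lt_top μ _).ne)

lemma law_singleton {Ω α : Type*} [MeasurableSpace Ω] [Fintype α] [MeasurableSpace α]
    [MeasurableSingletonClass α] (μ : Measure Ω) {X : Ω → α} (hX : Measurable X)
    (hlaw : Measure.map X μ = uniformOn (Set.univ : Set α)) (a : α) :
    μ (X ⁻¹' {a}) = (Fintype.card α : ℝ≥0∞)⁻¹ := by
  rw [← Measure.map_apply hX (measurableSet_singleton a), hlaw, uniformOn_univ,
    Measure.count_singleton, ENNReal.div_eq_inv_mul, mul_one]


end Stmt7Aux

open Stmt7Aux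

theorem stmt7 {Ω : Type*} [MeasurableSpace Ω] (μ : Measure Ω) [IsProbabilityMeasure μ]
    (n p : ℕ) (hnp : n ≤ p) (c : Fin p → ℝ)
    [MeasurableSpace (Fin n ↪ Fin p)] [MeasurableSingletonClass (Fin n ↪ Fin p)]
    (σ : Ω → (Fin n ↪ Fin p)) (hσmeas : Measurable σ)
    (hσlaw : Measure.map σ μ = uniformOn (Set.univ : Set (Fin n ↪ Fin p)))
    (g : Fin n → Ω → Fin p) (hgmeas : ∀ i, Measurable (g i))
    (hgindep : iIndepFun g μ)
    (hglaw : ∀ i, Measure.map (g i) μ = uniformOn (Set.univ : Set (Fin p)))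
    (φ : ℝ → ℝ) (hφcont : Continuous φ) (hφconv : ConvexOn ℝ Set.univ φ) :
    (∫ ω, φ (∑ i, c (σ ω i)) ∂μ) ≤ ∫ ω, φ (∑ i, c (g i ω)) ∂μ := by
  classical
  have hL : (∫ ω, φ (∑ i, c (σ ω i)) ∂μ)
      = ∑ e : Fin n ↪ Fin p, (μ (σ ⁻¹' {e})).toReal * φ (∑ i, c (e i)) :=
    integral_comp_fintype μ hσmeas (fun e => φ (∑ i, c (e i)))
  have hGmeas : Measurable (fun ω i => g i ω) :=
    measurable_pi_lambda _ hgmeas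
  have hR : (∫ ω, φ (∑ i, c (g i ω)) ∂μ)
      = ∑ h : Fin n → Fin p, (μ ((fun ω i => g i ω) ⁻¹' {h})).toReal * φ (∑ i, c (h i)) :=
    integral_comp_fintype μ hGmeas (fun h => φ (∑ i, c (h i)))
  have hLval : ∀ e : Fin n ↪ Fin p,
      (μ (σ ⁻¹' {e})).toReal = (Fintype.card (Fin n ↪ Fin p) : ℝ)⁻¹ := by
    intro e
    rw [law_singleton μ hσmeas hσlaw e]
    simp
  have hRval : ∀ h : Fin n → Fin p,
      (μ ((fun ω i => g i ω) ⁻¹' {h})).toReal = ((p:ℝ)^n)⁻¹ := by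
    intro h
    have hset : (fun ω i => g i ω) ⁻¹' {h} = ⋂ i ∈ (Finset.univ : Finset (Fin n)), g i ⁻¹' {h i} := by
      ext ω
      simp [funext_iff, Set.mem_iInter]
    rw [hset, hgindep.measure_inter_preimage_eq_mul Finset.univ
      (sets := fun i => {h i}) (fun i _ => measurableSet_singleton _)]
    have hfac : ∀ i : Fin n, μ (g i ⁻¹' {h i}) = ((p:ℝ≥0∞))⁻¹ := by
      intro i
      rw [law_singleton μ (hgmeas i) (hglaw i) (h i), Fintype.card_fin]
    rw [Finset.prod_congr rfl (fun i _ => hfac i), Finset.prod_const, Finset.card_univ,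
      Fintype.card_fin, ← ENNReal.inv_pow, ENNReal.toReal_inv]
    simp
  rw [hL, hR]
  have e1 : ∑ e : Fin n ↪ Fin p, (μ (σ ⁻¹' {e})).toReal * φ (∑ i, c (e i))
      = ∑ e : Fin n ↪ Fin p, (Fintype.card (Fin n ↪ Fin p) : ℝ)⁻¹ * φ (∑ i, c (e i)) :=
    Finset.sum_congr rfl fun e _ => by rw [hLval e]
  have e2 : ∑ h : Fin n → Fin p, (μ ((fun ω i => g i ω) ⁻¹' {h})).toReal * φ (∑ i, c (h i))
      = ∑ h : Fin n → Fin p, ((p:ℝ)^n)⁻¹ * φ (∑ i, c (h i)) :=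
    Finset.sum_congr rfl fun h _ => by rw [hRval h]
  rw [e1, e2]
  exact key_ineq hnp c φ hφconv
end

section
/- Let λ > 0, let M̂ be a p×p symmetric matrix, let M = θθ^T for a vector θ ∈ ℝ^p with support S, and suppose ‖M̂ - M‖_∞ < λ (entrywise maximum norm) and ‖θ‖² ≥ 2λs where s = |S|. Then any maximizer P̂ of the SDP objective P ↦ ⟨M̂, P⟩ - λ‖P‖₁ over the Fantope F¹ = {P : P = P^T, tr(P) = 1, 0 ⪯ P ⪯ I} satisfies supp(P̂) ⊆ S, i.e., P̂_{ij} = 0 whenever (i,j) ∉ S×S. -/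
open Matrix

/-- The Fantope `F¹`: symmetric matrices `P` with `tr(P) = 1` and `0 ⪯ P ⪯ I`. -/
def Fantope1 {p : ℕ} (P : Matrix (Fin p) (Fin p) ℝ) : Prop :=
  P.IsSymm ∧ P.trace = 1 ∧ P.PosSemidef ∧ (1 - P).PosSemidef

/-- SDP objective `⟨Mhat, P⟩ - λ‖P‖₁`. -/
noncomputable def sdpObj {p : ℕ} (M : Matrix (Fin p) (Fin p) ℝ) (lam : ℝ)
    (P : Matrix (Fin p) (Fin p) ℝ) : ℝ :=
  (∑ i, ∑ j, M i j * P i j) - lam * ∑ i, ∑ j, |P i j|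

section Aux
variable {p : ℕ}

lemma psd_of_form (A : Matrix (Fin p) (Fin p) ℝ) (hs : A.IsSymm)
    (h : ∀ x : Fin p → ℝ, 0 ≤ ∑ i, ∑ j, x i * A i j * x j) : A.PosSemidef := by
  refine Matrix.posSemidef_iff_dotProduct_mulVec.mpr ⟨?_, ?_⟩
  · rw [Matrix.IsHermitian]; simpa [Matrix.IsSymm] using hs
  · intro x
    have := h x
    simpa [dotProduct, mulVec, Finset.mul_sum, mul_assoc] using this

lemma form_of_psd {A : Matrix (Fin p) (Fin p) ℝ} (hA : A.PosSemidef) (x : Fin p → ℝ) :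
    0 ≤ ∑ i, ∑ j, x i * A i j * x j := by
  have := hA.dotProduct_mulVec_nonneg x
  simpa [dotProduct, mulVec, Finset.mul_sum, mul_assoc] using this

lemma psd_diag_nonneg {A : Matrix (Fin p) (Fin p) ℝ} (hA : A.PosSemidef) (i : Fin p) :
    0 ≤ A i i := by
  have := hA.dotProduct_mulVec_nonneg (Pi.single i 1)
  simpa [dotProduct, mulVec, Pi.single_apply, Finset.sum_ite_eq, Finset.sum_ite_eq'] using this

lemma psd_symm_apply {A : Matrix (Fin p) (Fin p) ℝ} (hA : A.PosSemidef) (i j : Fin p) :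
    A i j = A j i := by
  have := hA.1
  rw [Matrix.IsHermitian] at this
  have := congrFun (congrFun this i) j
  simpa using this.symm

lemma psd_apply_eq_zero {A : Matrix (Fin p) (Fin p) ℝ} (hA : A.PosSemidef) (i : Fin p)
    (hi : A i i = 0) (j : Fin p) : A i j = 0 := by
  have h1 : star (Pi.single i 1 : Fin p → ℝ) ⬝ᵥ A *ᵥ (Pi.single i 1) = 0 := by
    simpa [dotProduct, mulVec, Pi.single_apply, Finset.sum_ite_eq, Finset.sum_ite_eq'] using hi
  have h2 := (hA.dotProduct_mulVec_zero_iff _).mp h1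
  have h3 : A j i = 0 := by
    have := congrFun h2 j
    simpa [mulVec, dotProduct, Pi.single_apply] using this
  rw [psd_symm_apply hA, h3]

open scoped MatrixOrder in
lemma quad_le_trace {A : Matrix (Fin p) (Fin p) ℝ} (hA : A.PosSemidef) (x : Fin p → ℝ) :
    ∑ i, ∑ j, x i * A i j * x j ≤ A.trace * ∑ j, x j ^ 2 := by
  classical
  set B := CFC.sqrt A with hBdef
  have hB : B.PosSemidef := (CFC.sqrt_nonneg A).posSemidef
  have hBsym : ∀ i j, B i j = B j i := fun i j => psd_symm_apply hB i j
  have hBB : B * B = A := by rw [← pow_two]; exact CFC.sq_sqrt A hA.nonneg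
  have key : ∑ i, ∑ j, x i * A i j * x j = ∑ k, (∑ j, B k j * x j) ^ 2 := by
    rw [← hBB]
    have h1 : ∀ i j, x i * (B * B) i j * x j = ∑ k, (x i * B i k) * (B k j * x j) := by
      intro i j
      rw [Matrix.mul_apply, Finset.mul_sum, Finset.sum_mul]
      refine Finset.sum_congr rfl fun k _ => by ring
    simp_rw [h1]
    calc ∑ i, ∑ j, ∑ k, (x i * B i k) * (B k j * x j)
        = ∑ i, ∑ k, ∑ j, (x i * B i k) * (B k j * x j) :=
          Finset.sum_congr rfl fun i _ => Finset.sum_comm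
      _ = ∑ k, ∑ i, ∑ j, (x i * B i k) * (B k j * x j) := Finset.sum_comm
      _ = ∑ k, (∑ j, B k j * x j) ^ 2 := by
          refine Finset.sum_congr rfl fun k _ => ?_
          rw [pow_two, Finset.sum_mul_sum Finset.univ Finset.univ (fun j => B k j * x j)
            (fun j => B k j * x j)]
          refine Finset.sum_congr rfl fun i _ => Finset.sum_congr rfl fun j _ => ?_
          rw [(hBsym i k)]
          ring
  have htr : A.trace = ∑ k, ∑ j, B k j ^ 2 := by
    rw [← hBB, Matrix.trace]
    refine Finset.sum_congr rfl fun k _ => ?_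
    rw [Matrix.diag_apply, Matrix.mul_apply]
    refine Finset.sum_congr rfl fun j _ => ?_
    rw [hBsym j k]; ring
  rw [key, htr, Finset.sum_mul]
  refine Finset.sum_le_sum fun k _ => ?_
  exact Finset.sum_mul_sq_le_sq_mul_sq Finset.univ (fun j => B k j) x

lemma sdpObj_smul (M : Matrix (Fin p) (Fin p) ℝ) (lam c : ℝ) (hc : 0 ≤ c)
    (Q : Matrix (Fin p) (Fin p) ℝ) : sdpObj M lam (c • Q) = c * sdpObj M lam Q := by
  unfold sdpObj
  have h1 : ∀ i j : Fin p, (c • Q) i j = c * Q i j := fun i j => rfl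
  simp_rw [h1, abs_mul, abs_of_nonneg hc]
  rw [mul_sub]
  congr 1
  · rw [Finset.mul_sum]
    refine Finset.sum_congr rfl fun i _ => ?_
    rw [Finset.mul_sum]
    exact Finset.sum_congr rfl fun j _ => by ring
  · simp_rw [← Finset.mul_sum]
    ring

/-- Candidate matrix `θθᵀ/‖θ‖²` lies in the Fantope and has nonnegative objective. -/
lemma candidate_good (lam : ℝ) (hlam : 0 < lam) (Mhat : Matrix (Fin p) (Fin p) ℝ)
    (θ : Fin p → ℝ) (hθ0 : θ ≠ 0)
    (hinf : ∀ i j, |Mhat i j - θ i * θ j| < lam)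
    (hsignal : 2 * lam * ({i | θ i ≠ 0}.ncard : ℝ) ≤ ∑ i, θ i ^ 2) :
    ∃ P : Matrix (Fin p) (Fin p) ℝ, Fantope1 P ∧ 0 ≤ sdpObj Mhat lam P := by
  classical
  set n := ∑ i, θ i ^ 2 with hn_def
  have hn : 0 < n := by
    have : ∃ i, θ i ≠ 0 := by
      by_contra h
      push_neg at h
      exact hθ0 (funext h)
    obtain ⟨i, hi⟩ := this
    exact Finset.sum_pos' (fun j _ => sq_nonneg _)
      ⟨i, Finset.mem_univ i, by positivity⟩
  set P : Matrix (Fin p) (Fin p) ℝ := Matrix.of fun i j => θ i * θ j / n with hP_def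
  have hPapp : ∀ i j, P i j = θ i * θ j / n := fun i j => rfl
  have hform : ∀ x : Fin p → ℝ,
      ∑ i, ∑ j, x i * P i j * x j = (∑ i, θ i * x i) ^ 2 / n := by
    intro x
    rw [pow_two, Finset.sum_mul_sum Finset.univ Finset.univ (fun i => θ i * x i)
      (fun j => θ j * x j), Finset.sum_div]
    refine Finset.sum_congr rfl fun i _ => ?_
    rw [Finset.sum_div]
    refine Finset.sum_congr rfl fun j _ => ?_
    rw [hPapp]; ring
  have hsymm : P.IsSymm := by
    ext i j
    rw [Matrix.transpose_apply, hPapp, hPapp]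
    ring
  have hFan : Fantope1 P := by
    refine ⟨hsymm, ?_, ?_, ?_⟩
    · rw [Matrix.trace]
      simp only [Matrix.diag_apply, hPapp]
      rw [← Finset.sum_div]
      rw [div_eq_one_iff_eq hn.ne']
      exact Finset.sum_congr rfl fun i _ => (pow_two (θ i)).symm
    · refine psd_of_form P hsymm fun x => ?_
      rw [hform]
      positivity
    · refine psd_of_form _ ?_ fun x => ?_
      · rw [Matrix.IsSymm, Matrix.transpose_sub, Matrix.transpose_one, hsymm]
      · have hsplit : ∑ i, ∑ j, x i * (1 - P) i j * x j
            = (∑ i, x i ^ 2) - ∑ i, ∑ j, x i * P i j * x j := by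
          rw [← Finset.sum_sub_distrib]
          refine Finset.sum_congr rfl fun i _ => ?_
          have hterm : ∀ j, x i * (1 - P) i j * x j
              = (if i = j then x i * x j else 0) - x i * P i j * x j := by
            intro j
            rw [Matrix.sub_apply, Matrix.one_apply]
            split_ifs <;> ring
          simp_rw [hterm]
          rw [Finset.sum_sub_distrib]
          congr 1
          simp [pow_two]
        rw [hsplit, hform, sub_nonneg, div_le_iff₀ hn]
        calc (∑ i, θ i * x i) ^ 2 ≤ (∑ i, θ i ^ 2) * ∑ i, x i ^ 2 :=
              Finset.sum_mul_sq_le_sq_mul_sq Finset.univ θ x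
          _ = (∑ i, x i ^ 2) * n := by rw [mul_comm]
  refine ⟨P, hFan, ?_⟩
  set T := ∑ i, |θ i| with hT_def
  set s := ({i | θ i ≠ 0}.ncard : ℝ) with hs_def
  have habs : ∑ i, ∑ j, |P i j| = T * T / n := by
    rw [hT_def, Finset.sum_mul_sum Finset.univ Finset.univ (fun i => |θ i|) (fun j => |θ j|),
      Finset.sum_div]
    refine Finset.sum_congr rfl fun i _ => ?_
    rw [Finset.sum_div]
    refine Finset.sum_congr rfl fun j _ => ?_
    rw [hPapp, abs_div, abs_mul, abs_of_pos hn]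
  have hobj : sdpObj Mhat lam P
      = (∑ i, ∑ j, Mhat i j * (θ i * θ j)) / n - lam * (T * T / n) := by
    unfold sdpObj
    rw [habs]
    congr 1
    rw [Finset.sum_div]
    refine Finset.sum_congr rfl fun i _ => ?_
    rw [Finset.sum_div]
    refine Finset.sum_congr rfl fun j _ => ?_
    rw [hPapp]
    ring
  have hMlow : n * n - lam * (T * T) ≤ ∑ i, ∑ j, Mhat i j * (θ i * θ j) := by
    have h1 : n * n = ∑ i, ∑ j, (θ i * θ j) ^ 2 := by
      rw [hn_def, Finset.sum_mul_sum Finset.univ Finset.univ (fun i => θ i ^ 2)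
        (fun j => θ j ^ 2)]
      exact Finset.sum_congr rfl fun i _ => Finset.sum_congr rfl fun j _ => by ring
    have h2 : T * T = ∑ i, ∑ j, |θ i| * |θ j| := by
      rw [hT_def, Finset.sum_mul_sum Finset.univ Finset.univ (fun i => |θ i|) (fun j => |θ j|)]
    rw [h1, h2, Finset.mul_sum, ← Finset.sum_sub_distrib]
    refine Finset.sum_le_sum fun i _ => ?_
    rw [Finset.mul_sum, ← Finset.sum_sub_distrib]
    refine Finset.sum_le_sum fun j _ => ?_
    have h3 : |Mhat i j - θ i * θ j| ≤ lam := (hinf i j).le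
    have h4 : -(|Mhat i j - θ i * θ j| * |θ i * θ j|) ≤ (Mhat i j - θ i * θ j) * (θ i * θ j) := by
      rw [← abs_mul]; exact neg_abs_le _
    have h5 : |Mhat i j - θ i * θ j| * |θ i * θ j| ≤ lam * |θ i * θ j| :=
      mul_le_mul_of_nonneg_right h3 (abs_nonneg _)
    have h6 : |θ i * θ j| = |θ i| * |θ j| := abs_mul _ _
    have h7 : Mhat i j * (θ i * θ j)
        = (θ i * θ j) ^ 2 + (Mhat i j - θ i * θ j) * (θ i * θ j) := by ring
    rw [← h6]
    linarith
  have hT2 : T * T ≤ s * n := by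
    classical
    set Sf := Finset.univ.filter (fun i => θ i ≠ 0) with hSf
    have hcard : s = (Sf.card : ℝ) := by
      rw [hs_def]
      congr 1
      have : {i | θ i ≠ 0} = ↑Sf := by ext i; simp [hSf]
      rw [this, Set.ncard_coe_finset]
    have hTeq : T = ∑ i ∈ Sf, |θ i| := by
      rw [hT_def]
      exact (Finset.sum_filter_of_ne (fun i _ h => abs_ne_zero.mp h)).symm
    have hcs : (∑ i ∈ Sf, (1 : ℝ) * |θ i|) ^ 2
        ≤ (∑ i ∈ Sf, (1 : ℝ) ^ 2) * ∑ i ∈ Sf, |θ i| ^ 2 :=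
      Finset.sum_mul_sq_le_sq_mul_sq Sf (fun _ => (1 : ℝ)) (fun i => |θ i|)
    have hsub : ∑ i ∈ Sf, |θ i| ^ 2 ≤ n := by
      rw [hn_def]
      calc ∑ i ∈ Sf, |θ i| ^ 2 = ∑ i ∈ Sf, θ i ^ 2 :=
            Finset.sum_congr rfl fun i _ => sq_abs _
        _ ≤ ∑ i, θ i ^ 2 :=
            Finset.sum_le_sum_of_subset_of_nonneg (Finset.filter_subset _ _)
              (fun i _ _ => sq_nonneg _)
    have hone : (∑ i ∈ Sf, (1 : ℝ) ^ 2) = (Sf.card : ℝ) := by simp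
    calc T * T = (∑ i ∈ Sf, (1 : ℝ) * |θ i|) ^ 2 := by
          rw [hTeq, pow_two]; simp
      _ ≤ (∑ i ∈ Sf, (1 : ℝ) ^ 2) * ∑ i ∈ Sf, |θ i| ^ 2 := hcs
      _ ≤ (Sf.card : ℝ) * n := by
          rw [hone]
          exact mul_le_mul_of_nonneg_left hsub (Nat.cast_nonneg _)
      _ = s * n := by rw [hcard]
  have e1 : (n * n - lam * (T * T)) / n ≤ (∑ i, ∑ j, Mhat i j * (θ i * θ j)) / n :=
    by apply div_le_div_of_nonneg_right hMlow hn.le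
  have e0 : (n * n - lam * (T * T)) / n = n - lam * (T * T / n) := by
    field_simp
  have e3 : T * T / n ≤ s := by
    rw [div_le_iff₀ hn]
    exact hT2
  have e4 : lam * (T * T / n) ≤ lam * s := mul_le_mul_of_nonneg_left e3 hlam.le
  rw [hobj]
  rw [e0] at e1
  rw [hs_def] at e4
  linarith [hsignal]

end Aux

theorem stmt12 (p : ℕ) (lam : ℝ) (hlam : 0 < lam)
    (Mhat : Matrix (Fin p) (Fin p) ℝ) (hsymm : Mhat.IsSymm)
    (θ : Fin p → ℝ) (hθ0 : θ ≠ 0)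
    (hinf : ∀ i j, |Mhat i j - θ i * θ j| < lam)
    (hsignal : 2 * lam * ({i | θ i ≠ 0}.ncard : ℝ) ≤ ∑ i, θ i ^ 2)
    (Phat : Matrix (Fin p) (Fin p) ℝ) (hPhat : Fantope1 Phat)
    (hmax : ∀ P : Matrix (Fin p) (Fin p) ℝ, Fantope1 P → sdpObj Mhat lam P ≤ sdpObj Mhat lam Phat) :
    ∀ i j, (θ i = 0 ∨ θ j = 0) → Phat i j = 0 := by
  classical
  by_contra hcon
  push_neg at hcon
  obtain ⟨i0, j0, hij0, hne⟩ := hcon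
  obtain ⟨P0, hP0fan, hP0obj⟩ := candidate_good lam hlam Mhat θ hθ0 hinf hsignal
  have hPhatObj : 0 ≤ sdpObj Mhat lam Phat := hP0obj.trans (hmax P0 hP0fan)
  obtain ⟨hPsym, hPtr, hPpsd, hPId⟩ := hPhat
  set Q : Matrix (Fin p) (Fin p) ℝ :=
    Matrix.of (fun i j => if θ i = 0 ∨ θ j = 0 then 0 else Phat i j) with hQdef
  have hQapp : ∀ i j, Q i j = if θ i = 0 ∨ θ j = 0 then 0 else Phat i j := fun i j => rfl
  have hre : ∀ (R : Matrix (Fin p) (Fin p) ℝ),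
      sdpObj Mhat lam R = ∑ i, ∑ j, (Mhat i j * R i j - lam * |R i j|) := by
    intro R
    unfold sdpObj
    rw [Finset.mul_sum, ← Finset.sum_sub_distrib]
    refine Finset.sum_congr rfl fun i _ => ?_
    rw [Finset.mul_sum, ← Finset.sum_sub_distrib]
  have hterm_le : ∀ i j, Mhat i j * Phat i j - lam * |Phat i j|
      ≤ Mhat i j * Q i j - lam * |Q i j| := by
    intro i j
    rw [hQapp]
    split_ifs with h
    · have hz : θ i * θ j = 0 := by rcases h with h | h <;> simp [h]
      have hM : |Mhat i j| ≤ lam := by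
        have := (hinf i j).le; rwa [hz, sub_zero] at this
      have h1 : Mhat i j * Phat i j ≤ lam * |Phat i j| := by
        calc Mhat i j * Phat i j ≤ |Mhat i j * Phat i j| := le_abs_self _
          _ = |Mhat i j| * |Phat i j| := abs_mul _ _
          _ ≤ lam * |Phat i j| := mul_le_mul_of_nonneg_right hM (abs_nonneg _)
      simp only [mul_zero, abs_zero, sub_zero]
      linarith
    · exact le_refl _
  have hterm_lt : Mhat i0 j0 * Phat i0 j0 - lam * |Phat i0 j0|
      < Mhat i0 j0 * Q i0 j0 - lam * |Q i0 j0| := by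
    rw [hQapp, if_pos hij0]
    have hz : θ i0 * θ j0 = 0 := by rcases hij0 with h | h <;> simp [h]
    have hM : |Mhat i0 j0| < lam := by
      have := hinf i0 j0; rwa [hz, sub_zero] at this
    have habspos : 0 < |Phat i0 j0| := abs_pos.mpr hne
    have h1 : Mhat i0 j0 * Phat i0 j0 < lam * |Phat i0 j0| := by
      calc Mhat i0 j0 * Phat i0 j0 ≤ |Mhat i0 j0 * Phat i0 j0| := le_abs_self _
        _ = |Mhat i0 j0| * |Phat i0 j0| := abs_mul _ _
        _ < lam * |Phat i0 j0| := mul_lt_mul_of_pos_right hM habspos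
    simp only [mul_zero, abs_zero, sub_zero]
    linarith
  have hkey : sdpObj Mhat lam Phat < sdpObj Mhat lam Q := by
    rw [hre Phat, hre Q]
    refine Finset.sum_lt_sum (fun i _ => Finset.sum_le_sum fun j _ => hterm_le i j)
      ⟨i0, Finset.mem_univ i0, ?_⟩
    exact Finset.sum_lt_sum (fun j _ => hterm_le i0 j) ⟨j0, Finset.mem_univ j0, hterm_lt⟩
  have hQsym : Q.IsSymm := by
    ext i j
    rw [Matrix.transpose_apply, hQapp, hQapp]
    by_cases h : θ i = 0 ∨ θ j = 0
    · rw [if_pos h, if_pos h.symm]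
    · rw [if_neg h, if_neg (fun hc => h hc.symm)]
      exact hPsym.apply i j
  have hQpsd : Q.PosSemidef := by
    refine psd_of_form Q hQsym fun x => ?_
    set y : Fin p → ℝ := fun i => if θ i = 0 then 0 else x i with hy
    have heq : ∑ i, ∑ j, x i * Q i j * x j = ∑ i, ∑ j, y i * Phat i j * y j := by
      refine Finset.sum_congr rfl fun i _ => Finset.sum_congr rfl fun j _ => ?_
      rw [hQapp]
      by_cases hi : θ i = 0 <;> by_cases hj : θ j = 0 <;> simp [hy, hi, hj]
    rw [heq]
    exact form_of_psd hPpsd y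
  have hQtr : Q.trace = ∑ i, Q i i := rfl
  have hdiagnn : ∀ i, 0 ≤ Q i i := by
    intro i
    rw [hQapp]
    split_ifs with h
    · exact le_refl 0
    · exact psd_diag_nonneg hPpsd i
  have htnn : 0 ≤ Q.trace := by
    rw [hQtr]
    exact Finset.sum_nonneg fun i _ => hdiagnn i
  have ht1 : Q.trace ≤ 1 := by
    rw [hQtr, ← hPtr]
    refine Finset.sum_le_sum fun i _ => ?_
    rw [hQapp]
    split_ifs with h
    · exact psd_diag_nonneg hPpsd i
    · exact le_refl _
  rcases eq_or_lt_of_le htnn with ht0 | htpos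
  · -- trace zero : Q = 0
    have hdiag0 : ∀ i, Q i i = 0 := by
      intro i
      have := (Finset.sum_eq_zero_iff_of_nonneg (fun i _ => hdiagnn i)).mp (by rw [← hQtr]; exact ht0.symm)
      exact this i (Finset.mem_univ i)
    have hQ0 : Q = 0 := by
      ext i j
      exact psd_apply_eq_zero hQpsd i (hdiag0 i) j
    have hz : sdpObj Mhat lam Q = 0 := by
      rw [hQ0]; unfold sdpObj; simp
    rw [hz] at hkey
    linarith
  · -- trace positive
    set t := Q.trace with ht_def
    set R : Matrix (Fin p) (Fin p) ℝ := t⁻¹ • Q with hR_def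
    have hRfan : Fantope1 R := by
      refine ⟨?_, ?_, ?_, ?_⟩
      · rw [Matrix.IsSymm, hR_def, Matrix.transpose_smul, hQsym]
      · rw [hR_def, Matrix.trace_smul, smul_eq_mul, inv_mul_cancel₀ htpos.ne']
      · refine psd_of_form R ?_ fun x => ?_
        · rw [Matrix.IsSymm, hR_def, Matrix.transpose_smul, hQsym]
        · have : ∀ i j, x i * R i j * x j = t⁻¹ * (x i * Q i j * x j) := by
            intro i j
            rw [hR_def, Matrix.smul_apply, smul_eq_mul]
            ring
          simp_rw [this, ← Finset.mul_sum]
          exact mul_nonneg (inv_nonneg.mpr htpos.le) (form_of_psd hQpsd x)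
      · refine psd_of_form _ ?_ fun x => ?_
        · rw [Matrix.IsSymm, Matrix.transpose_sub, Matrix.transpose_one, hR_def,
            Matrix.transpose_smul, hQsym]
        · have hterm : ∀ i j, x i * (1 - R) i j * x j
              = (if i = j then x i * x j else 0) - t⁻¹ * (x i * Q i j * x j) := by
            intro i j
            rw [Matrix.sub_apply, Matrix.one_apply, hR_def, Matrix.smul_apply, smul_eq_mul]
            split_ifs <;> ring
          simp_rw [hterm, Finset.sum_sub_distrib]
          have h1 : ∑ i, ∑ j, (if i = j then x i * x j else 0) = ∑ i, x i ^ 2 := by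
            refine Finset.sum_congr rfl fun i _ => ?_
            simp [Finset.sum_ite_eq, pow_two]
          rw [h1]
          have h2 : ∑ i, ∑ j, t⁻¹ * (x i * Q i j * x j)
              = t⁻¹ * ∑ i, ∑ j, x i * Q i j * x j := by
            simp_rw [← Finset.mul_sum]
          rw [h2, sub_nonneg]
          have h3 := quad_le_trace hQpsd x
          rw [← ht_def] at h3
          calc t⁻¹ * ∑ i, ∑ j, x i * Q i j * x j ≤ t⁻¹ * (t * ∑ j, x j ^ 2) :=
                mul_le_mul_of_nonneg_left h3 (inv_nonneg.mpr htpos.le)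
            _ = ∑ j, x j ^ 2 := by rw [inv_mul_cancel_left₀ htpos.ne']
    have hsm : sdpObj Mhat lam R = t⁻¹ * sdpObj Mhat lam Q :=
      sdpObj_smul Mhat lam t⁻¹ (inv_nonneg.mpr htpos.le) Q
    have h2 := hmax R hRfan
    have hQobj : sdpObj Mhat lam Q = t * sdpObj Mhat lam R := by
      rw [hsm, ← mul_assoc, mul_inv_cancel₀ htpos.ne', one_mul]
    have h3 : t * sdpObj Mhat lam R ≤ t * sdpObj Mhat lam Phat :=
      mul_le_mul_of_nonneg_left h2 htpos.le
    have h4 : t * sdpObj Mhat lam Phat ≤ sdpObj Mhat lam Phat := by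
      nlinarith [hPhatObj, ht1]
    rw [hQobj] at hkey
    linarith
end

section
/- Let M̂ be a p×p symmetric matrix, M = θθ^T with ‖θ‖² > 0 and s = |supp(θ)|, λ > 0, and suppose ‖M̂ - M‖_∞ ≤ λ. Suppose furthermore that M̂ - λZ̃ is supported on S×S (where S = supp(θ) and Z̃ is a symmetric matrix with ‖Z̃‖_∞ ≤ 1 and zero diagonal) with ‖θ‖² - 4λs > 0. Then the largest eigenvalue of M̂ - λZ̃ is at least ‖θ‖² - 2λs, every other eigenvalue is at most 2λs, and hence the spectral gap between the first and second eigenvalues is at least ‖θ‖² - 4λs. -/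
open Matrix

set_option maxHeartbeats 1600000 in
theorem stmt19 (p : ℕ) (Mhat Ztil : Matrix (Fin p) (Fin p) ℝ) (θ : Fin p → ℝ)
    (lam : ℝ) (hlam : 0 < lam)
    (hMsymm : Mhat.IsSymm) (hZsymm : Ztil.IsSymm)
    (hZdiag : ∀ i, Ztil i i = 0) (hZbound : ∀ i j, |Ztil i j| ≤ 1)
    (hinf : ∀ i j, |Mhat i j - θ i * θ j| ≤ lam)
    (hsupp : ∀ i j, (θ i = 0 ∨ θ j = 0) → (Mhat - lam • Ztil) i j = 0)
    (hA : (Mhat - lam • Ztil).IsHermitian)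
    (hgap : 0 < (∑ i, θ i ^ 2) - 4 * lam * ({i | θ i ≠ 0}.ncard : ℝ)) :
    ∃ i₀ : Fin p,
      (∑ i, θ i ^ 2) - 2 * lam * ({i | θ i ≠ 0}.ncard : ℝ) ≤ hA.eigenvalues i₀ ∧
      ∀ j ≠ i₀, hA.eigenvalues j ≤ 2 * lam * ({i | θ i ≠ 0}.ncard : ℝ) := by
  classical
  set T : ℝ := ∑ i, θ i ^ 2 with hTdef
  set σ : ℝ := 2 * lam * ({i | θ i ≠ 0}.ncard : ℝ) with hσdef
  have hncard0 : (0:ℝ) ≤ (({i | θ i ≠ 0}.ncard : ℝ)) := Nat.cast_nonneg _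
  have hσ0 : 0 ≤ σ := by positivity
  have hgap' : 0 < T - 2 * σ := by rw [hσdef]; nlinarith [hgap]
  have hT0 : 0 < T := by nlinarith
  have hp : p ≠ 0 := by
    rintro rfl
    rw [hTdef] at hT0
    simp at hT0
  haveI : Nonempty (Fin p) := ⟨⟨0, Nat.pos_of_ne_zero hp⟩⟩
  -- the support finset
  set S : Finset (Fin p) := Finset.univ.filter (fun i => θ i ≠ 0) with hSdef
  have hcard : ((S.card : ℝ)) = (({i | θ i ≠ 0}.ncard : ℝ)) := by
    have h1 : {i | θ i ≠ 0} = ↑S := by ext i; simp [hSdef]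
    rw [h1, Set.ncard_coe_finset]
  -- key quadratic form bound
  have hq : ∀ x : Fin p → ℝ,
      |x ⬝ᵥ ((Mhat - lam • Ztil) *ᵥ x) - (θ ⬝ᵥ x) ^ 2| ≤ σ * (x ⬝ᵥ x) := by
    intro x
    set g : Fin p → ℝ := fun i => if θ i = 0 then 0 else |x i| with hgdef
    have h1 : x ⬝ᵥ ((Mhat - lam • Ztil) *ᵥ x) - (θ ⬝ᵥ x) ^ 2 =
        ∑ i, ∑ j, x i * x j * ((Mhat - lam • Ztil) i j - θ i * θ j) := by
      rw [dotProduct, dotProduct, sq, Finset.sum_mul_sum, ← Finset.sum_sub_distrib]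
      refine Finset.sum_congr rfl fun i _ => ?_
      simp only [mulVec, dotProduct, Finset.mul_sum]
      rw [← Finset.sum_sub_distrib]
      refine Finset.sum_congr rfl fun j _ => ?_
      ring
    have hE : ∀ i j, |x i * x j * ((Mhat - lam • Ztil) i j - θ i * θ j)| ≤
        2 * lam * (g i * g j) := by
      intro i j
      by_cases hi : θ i = 0
      · rw [hsupp i j (Or.inl hi), hi]
        simp [hgdef, hi]
      by_cases hj : θ j = 0
      · rw [hsupp i j (Or.inr hj), hj]
        simp [hgdef, hj]
      · have hz := hZbound i j
        have hm := hinf i j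
        have habs : |(Mhat - lam • Ztil) i j - θ i * θ j| ≤ 2 * lam := by
          have heq : (Mhat - lam • Ztil) i j - θ i * θ j =
              (Mhat i j - θ i * θ j) + (-(lam * Ztil i j)) := by
            simp [Matrix.sub_apply, Matrix.smul_apply]
            ring
          rw [heq]
          refine (abs_add_le _ _).trans ?_
          rw [abs_neg, abs_mul, abs_of_pos hlam]
          nlinarith
        have hgi : g i = |x i| := by simp [hgdef, hi]
        have hgj : g j = |x j| := by simp [hgdef, hj]
        rw [abs_mul, abs_mul, hgi, hgj]
        have h0i : 0 ≤ |x i| := abs_nonneg _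
        have h0j : 0 ≤ |x j| := abs_nonneg _
        have hkey := mul_le_mul_of_nonneg_left habs (mul_nonneg h0i h0j)
        nlinarith [hkey]
    have h2 : |x ⬝ᵥ ((Mhat - lam • Ztil) *ᵥ x) - (θ ⬝ᵥ x) ^ 2| ≤
        ∑ i, ∑ j, 2 * lam * (g i * g j) := by
      rw [h1]
      refine (Finset.abs_sum_le_sum_abs _ _).trans ?_
      refine Finset.sum_le_sum fun i _ => ?_
      refine (Finset.abs_sum_le_sum_abs _ _).trans ?_
      exact Finset.sum_le_sum fun j _ => hE i j
    have h3 : ∑ i, ∑ j, 2 * lam * (g i * g j) = 2 * lam * (∑ i, g i) ^ 2 := by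
      rw [sq, Finset.sum_mul_sum, Finset.mul_sum]
      exact Finset.sum_congr rfl fun i _ => by rw [Finset.mul_sum]
    have hgS : ∑ i, g i = ∑ i ∈ S, g i := by
      refine (Finset.sum_subset (Finset.subset_univ S) fun k _ hk => ?_).symm
      simp only [hSdef, Finset.mem_filter, Finset.mem_univ, true_and, not_not] at hk
      simp [hgdef, hk]
    have h4 : (∑ i, g i) ^ 2 ≤ (S.card : ℝ) * (x ⬝ᵥ x) := by
      rw [hgS]
      have h5 : ∑ i ∈ S, g i ^ 2 ≤ x ⬝ᵥ x := by
        have h6 : ∑ i ∈ S, g i ^ 2 = ∑ i ∈ S, x i * x i := by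
          refine Finset.sum_congr rfl fun k hk => ?_
          simp only [hSdef, Finset.mem_filter, Finset.mem_univ, true_and] at hk
          simp only [hgdef, if_neg hk]
          rw [sq_abs, sq]
        rw [h6, dotProduct]
        exact Finset.sum_le_sum_of_subset_of_nonneg (Finset.subset_univ S)
          (fun k _ _ => mul_self_nonneg _)
      calc (∑ i ∈ S, g i) ^ 2 ≤ (S.card : ℝ) * ∑ i ∈ S, g i ^ 2 :=
            sq_sum_le_card_mul_sum_sq
        _ ≤ (S.card : ℝ) * (x ⬝ᵥ x) := mul_le_mul_of_nonneg_left h5 (Nat.cast_nonneg _)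
    calc |x ⬝ᵥ ((Mhat - lam • Ztil) *ᵥ x) - (θ ⬝ᵥ x) ^ 2|
        ≤ ∑ i, ∑ j, 2 * lam * (g i * g j) := h2
      _ = 2 * lam * (∑ i, g i) ^ 2 := h3
      _ ≤ 2 * lam * ((S.card : ℝ) * (x ⬝ᵥ x)) := by
          exact mul_le_mul_of_nonneg_left h4 (by positivity)
      _ = σ * (x ⬝ᵥ x) := by rw [hσdef, hcard]; ring
  -- spectral decomposition
  set U : Matrix (Fin p) (Fin p) ℝ := (hA.eigenvectorUnitary : Matrix (Fin p) (Fin p) ℝ)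
    with hUdef
  set μ : Fin p → ℝ := hA.eigenvalues with hμdef
  have hstar : star U = Uᵀ := by
    rw [Matrix.star_eq_conjTranspose, Matrix.conjTranspose_eq_transpose_of_trivial]
  have hUmem : U ∈ Matrix.unitaryGroup (Fin p) ℝ := SetLike.coe_mem _
  have hUUt : U * Uᵀ = 1 := by rw [← hstar]; exact (Matrix.mem_unitaryGroup_iff).mp hUmem
  have hUtU : Uᵀ * U = 1 := by rw [← hstar]; exact (Matrix.mem_unitaryGroup_iff').mp hUmem
  have hspec : (Mhat - lam • Ztil) = U * Matrix.diagonal μ * Uᵀ := by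
    have h := hA.spectral_theorem
    rw [Unitary.conjStarAlgAut_apply, ← hUdef, hstar] at h
    simpa [RCLike.ofReal_real_eq_id] using h
  have hdot : ∀ d e : Fin p → ℝ, (U *ᵥ d) ⬝ᵥ (U *ᵥ e) = d ⬝ᵥ e := by
    intro d e
    rw [dotProduct_mulVec]
    congr 1
    rw [← vecMul_transpose U d, vecMul_vecMul, hUtU, vecMul_one]
  have hqd : ∀ d : Fin p → ℝ,
      (U *ᵥ d) ⬝ᵥ ((Mhat - lam • Ztil) *ᵥ (U *ᵥ d)) = ∑ j, μ j * d j ^ 2 := by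
    intro d
    have h1 : (Mhat - lam • Ztil) *ᵥ (U *ᵥ d) = U *ᵥ (Matrix.diagonal μ *ᵥ d) := by
      rw [hspec, mulVec_mulVec, mulVec_mulVec, mul_assoc, mul_assoc, hUtU, mul_one,
        ← mulVec_mulVec]
    rw [h1, hdot, dotProduct]
    refine Finset.sum_congr rfl fun k _ => ?_
    rw [mulVec_diagonal]
    ring
  have hsurj : ∀ x : Fin p → ℝ, U *ᵥ (Uᵀ *ᵥ x) = x := by
    intro x
    rw [mulVec_mulVec, hUUt, one_mulVec]
  obtain ⟨i₀, hmax⟩ := Finite.exists_max μ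
  set dθ : Fin p → ℝ := Uᵀ *ᵥ θ with hdθdef
  have hθ : U *ᵥ dθ = θ := hsurj θ
  have hθθ : θ ⬝ᵥ θ = T := by
    rw [dotProduct, hTdef]
    exact Finset.sum_congr rfl fun i _ => (sq (θ i)).symm
  have hdθdθ : dθ ⬝ᵥ dθ = T := by rw [← hθθ, ← hθ, hdot]
  have hqθ : θ ⬝ᵥ ((Mhat - lam • Ztil) *ᵥ θ) = ∑ j, μ j * dθ j ^ 2 := by
    rw [← hθ, hqd]
  clear_value U μ dθ
  refine ⟨i₀, ?_, ?_⟩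
  · -- lower bound for the top eigenvalue
    have h1 := hq θ
    rw [hθθ, hqθ, abs_le] at h1
    have h2 : ∑ j, μ j * dθ j ^ 2 ≤ μ i₀ * T := by
      rw [← hdθdθ, dotProduct, Finset.mul_sum]
      refine Finset.sum_le_sum fun k _ => ?_
      have := hmax k
      nlinarith [sq_nonneg (dθ k), mul_self_nonneg (dθ k)]
    have h3 : T ^ 2 - σ * T ≤ μ i₀ * T := by nlinarith [h1.1]
    have : T - σ ≤ μ i₀ := by nlinarith
    exact this
  · -- upper bound for the other eigenvalues
    intro j hji
    by_contra hcon
    push_neg at hcon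
    have hij : μ j ≤ μ i₀ := hmax j
    obtain ⟨a, b, hab1, hab2⟩ : ∃ a b : ℝ, a ^ 2 + b ^ 2 = 1 ∧ a * dθ j + b * dθ i₀ = 0 := by
      by_cases hr : dθ j ^ 2 + dθ i₀ ^ 2 = 0
      · refine ⟨1, 0, by norm_num, ?_⟩
        have h1 : dθ j = 0 := by nlinarith [sq_nonneg (dθ j), sq_nonneg (dθ i₀)]
        rw [h1]; ring
      · have hrpos : 0 < dθ j ^ 2 + dθ i₀ ^ 2 :=
          lt_of_le_of_ne (by positivity) (Ne.symm hr)
        have hs0 : Real.sqrt (dθ j ^ 2 + dθ i₀ ^ 2) ≠ 0 := by positivity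
        have hs : Real.sqrt (dθ j ^ 2 + dθ i₀ ^ 2) ^ 2 = dθ j ^ 2 + dθ i₀ ^ 2 :=
          Real.sq_sqrt hrpos.le
        refine ⟨dθ i₀ / Real.sqrt (dθ j ^ 2 + dθ i₀ ^ 2),
          -(dθ j) / Real.sqrt (dθ j ^ 2 + dθ i₀ ^ 2), ?_, ?_⟩
        · rw [div_pow, div_pow, ← add_div, hs]
          rw [neg_pow]
          ring_nf
          rw [add_comm (dθ i₀ ^2)]
          field_simp
          ring
        · field_simp
          ring
    set d : Fin p → ℝ := fun k => if k = j then a else if k = i₀ then b else 0 with hddef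
    have hdj : d j = a := by simp [hddef]
    have hdi : d i₀ = b := by simp [hddef, (Ne.symm hji)]
    have hpair : ∀ f : Fin p → ℝ, (∀ k, k ≠ j → k ≠ i₀ → f k = 0) →
        ∑ k, f k = f j + f i₀ := by
      intro f hf
      have h1 := Finset.sum_subset (Finset.subset_univ ({j, i₀} : Finset (Fin p)))
        (fun k _ hk => by
          simp only [Finset.mem_insert, Finset.mem_singleton, not_or] at hk
          exact hf k hk.1 hk.2)
      rw [← h1, Finset.sum_pair hji]
    have hdoff : ∀ k, k ≠ j → k ≠ i₀ → d k = 0 := by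
      intro k h1 h2; simp [hddef, h1, h2]
    have hθx : θ ⬝ᵥ (U *ᵥ d) = 0 := by
      rw [← hθ, hdot, dotProduct, hpair _ (fun k h1 h2 => by rw [hdoff k h1 h2, mul_zero]),
        hdj, hdi]
      nlinarith [hab2]
    have hxx : (U *ᵥ d) ⬝ᵥ (U *ᵥ d) = 1 := by
      rw [hdot, dotProduct, hpair _ (fun k h1 h2 => by rw [hdoff k h1 h2, mul_zero]),
        hdj, hdi]
      nlinarith [hab1]
    have hqx : (U *ᵥ d) ⬝ᵥ ((Mhat - lam • Ztil) *ᵥ (U *ᵥ d)) = μ j * a ^ 2 + μ i₀ * b ^ 2 := by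
      rw [hqd, hpair _ (fun k h1 h2 => by rw [hdoff k h1 h2]; ring), hdj, hdi]
    have h1 := hq (U *ᵥ d)
    rw [hθx, hqx, hxx, abs_le] at h1
    have h2 := h1.2
    nlinarith [sq_nonneg a, sq_nonneg b]
end
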